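/- arXiv:1502.02623 — 2 statements merged into one kernel-verified Lean document; each statement's English description precedes it below -/
import Mathlib

section
/- Let Π = (P, 𝓛) be a finite projective plane of order n, let m ≥ 1, and let v : P → ℤ/mℤ be a line-invariant function. Then n·v(a) = n·v(b) for all points a, b ∈ P; i.e., the value n·v(x) ∈ ℤ/mℤ is independent of the point x. -/
open Configuration

/-- The sum of `v` over the points of the line `l`. -/
noncomputable def lineSum {P L G : Type*} [Membership P L] [AddCommMonoid G]
    (v : P → G) (l : L) : G :=
  ∑ᶠ x ∈ {x : P | x ∈ l}, v x

/-- `v : P → G` is line invariant if its sum along every line of `L` is the same. -/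
def LineInvariant (P L : Type*) {G : Type*} [Membership P L] [AddCommMonoid G]
    (v : P → G) : Prop :=
  ∀ l l' : L, lineSum v l = lineSum v l'

open Classical Finset in
lemma key_sum {P L : Type*} [Membership P L] [Fintype P] [Fintype L]
    [ProjectivePlane P L] {n : ℕ} (hn : ProjectivePlane.order P L = n)
    {G : Type*} [AddCommGroup G] (v : P → G) (a : P) :
    ∑ l ∈ univ.filter (fun l : L => a ∈ l), lineSum v l = n • v a + ∑ x, v x := by
  classical
  have hline : ∀ l : L, lineSum v l = ∑ x ∈ univ.filter (· ∈ l), v x := by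
    intro l
    have h : {x : P | x ∈ l} = ↑(univ.filter (· ∈ l) : Finset P) := by ext x; simp
    rw [lineSum, h, finsum_mem_coe_finset]
  set S : Finset L := univ.filter (fun l : L => a ∈ l) with hS
  set T : L → Finset P := fun l => univ.filter (fun x => x ∈ l ∧ x ≠ a) with hT
  have hcardS : S.card = n + 1 := by
    have : S.card = lineCount L a := by
      rw [lineCount, Nat.card_eq_fintype_card, Fintype.card_subtype]
    rw [this, ProjectivePlane.lineCount_eq, hn]
  have hsplit : ∀ l ∈ S, lineSum v l = v a + ∑ x ∈ T l, v x := by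
    intro l hl
    rw [hS, mem_filter] at hl
    rw [hline l]
    have : (univ.filter (· ∈ l) : Finset P) = insert a (T l) := by
      ext x
      simp only [hT, mem_filter, mem_univ, true_and, mem_insert]
      constructor
      · intro hx
        by_cases hxa : x = a
        · exact Or.inl hxa
        · exact Or.inr ⟨hx, hxa⟩
      · rintro (rfl | ⟨h1, -⟩)
        · exact hl.2
        · exact h1
    rw [this, Finset.sum_insert (by simp [hT])]
  have hdisj : (S : Set L).PairwiseDisjoint T := by
    intro l₁ h₁ l₂ h₂ hne
    simp only [Finset.coe_filter, Set.mem_setOf_eq, hS, mem_coe, mem_filter] at h₁ h₂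
    refine Finset.disjoint_left.mpr fun x hx₁ hx₂ => ?_
    simp only [hT, mem_filter, mem_univ, true_and] at hx₁ hx₂
    exact hx₁.2 ((Nondegenerate.eq_or_eq hx₁.1 h₁.2 hx₂.1 h₂.2).resolve_right hne)
  have hbiUnion : S.biUnion T = univ.filter (· ≠ a) := by
    ext x
    simp only [mem_biUnion, hS, hT, mem_filter, mem_univ, true_and]
    constructor
    · rintro ⟨l, hl, -, hx⟩; exact hx
    · intro hx
      exact ⟨HasLines.mkLine hx, (HasLines.mkLine_ax hx).2, (HasLines.mkLine_ax hx).1, hx⟩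
  calc ∑ l ∈ S, lineSum v l = ∑ l ∈ S, (v a + ∑ x ∈ T l, v x) :=
        Finset.sum_congr rfl hsplit
    _ = S.card • v a + ∑ l ∈ S, ∑ x ∈ T l, v x := by rw [Finset.sum_add_distrib, sum_const]
    _ = (n + 1) • v a + ∑ x ∈ S.biUnion T, v x := by
        rw [hcardS, Finset.sum_biUnion hdisj]
    _ = (n + 1) • v a + ∑ x ∈ univ.filter (· ≠ a), v x := by rw [hbiUnion]
    _ = n • v a + (v a + ∑ x ∈ univ.filter (· ≠ a), v x) := by
        rw [add_nsmul, one_nsmul]; abel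
    _ = n • v a + ∑ x, v x := by
        rw [← Finset.sum_insert (by simp)]
        have huniv : insert a (univ.filter (· ≠ a)) = (univ : Finset P) := by
          ext x; by_cases h : x = a <;> simp [h]
        rw [huniv]
/-- For any line-invariant `v : P → ℤ/mℤ` on a projective plane of order `n`,
the value `n • v x` is independent of the point `x`. -/
theorem stmt_6 {P L : Type*} [Membership P L] [Fintype P] [Fintype L]
    [ProjectivePlane P L] {n : ℕ} (hn : ProjectivePlane.order P L = n)
    (m : ℕ) (hm : 1 ≤ m) (v : P → ZMod m) (hv : LineInvariant P L v) :
    ∀ a b : P, n • v a = n • v b := by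
  classical
  intro a b
  obtain ⟨-, -, -, l₀, -⟩ := ProjectivePlane.exists_config (P := P) (L := L)
  have key : ∀ p : P, n • v p + ∑ x, v x = (n + 1) • lineSum v l₀ := by
    intro p
    rw [← key_sum hn v p]
    have hc : (Finset.univ.filter (fun l : L => p ∈ l)).card = n + 1 := by
      have : (Finset.univ.filter (fun l : L => p ∈ l)).card = lineCount L p := by
        rw [lineCount, Nat.card_eq_fintype_card, Fintype.card_subtype]
      rw [this, ProjectivePlane.lineCount_eq, hn]
    calc ∑ l ∈ Finset.univ.filter (fun l : L => p ∈ l), lineSum v l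
        = ∑ _l ∈ Finset.univ.filter (fun l : L => p ∈ l), lineSum v l₀ :=
          Finset.sum_congr rfl fun l _ => hv l l₀
      _ = (n + 1) • lineSum v l₀ := by rw [Finset.sum_const, hc]
  have := (key a).trans (key b).symm
  exact add_right_cancel this
end

section
/- Let Π = (P, 𝓛) be a finite projective plane of order n, let m ≥ 1, and let v : P → ℤ/mℤ be a line-invariant function. Then the image of v has at most gcd(n, m) elements. -/
open Configuration

section aux
set_option linter.unusedSectionVars false
variable {P L : Type*} [Membership P L] [Fintype P] [Fintype L] {G : Type*} [AddCommMonoid G]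

open Classical in
lemma lineSum_eq (v : P → G) (l : L) :
    lineSum v l = ∑ x ∈ Finset.univ.filter (fun x : P => x ∈ l), v x := by
  rw [lineSum, ← finsum_mem_coe_finset]
  congr 1
  ext x
  simp

open Classical in
lemma key_count [ProjectivePlane P L] (x : P) (v : P → G) :
    ∑ l ∈ Finset.univ.filter (fun l : L => x ∈ l), lineSum v l
      = lineCount L x • v x + ∑ y ∈ Finset.univ.erase x, v y := by
  have h1 : ∀ l ∈ Finset.univ.filter (fun l : L => x ∈ l), lineSum v l
      = ∑ y : P, if y ∈ l then v y else 0 := by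
    intro l _
    rw [lineSum_eq, Finset.sum_filter]
  rw [Finset.sum_congr rfl h1, Finset.sum_comm]
  have h2 : ∀ y : P, (∑ l ∈ Finset.univ.filter (fun l : L => x ∈ l), if y ∈ l then v y else 0)
      = (Finset.univ.filter (fun l : L => x ∈ l ∧ y ∈ l)).card • v y := by
    intro y
    rw [← Finset.sum_filter, Finset.filter_filter, Finset.sum_const]
  rw [Finset.sum_congr rfl (fun y _ => h2 y)]
  -- split off y = x
  rw [← Finset.add_sum_erase _ _ (Finset.mem_univ x)]
  congr 1
  · congr 1
    rw [lineCount, Nat.card_eq_fintype_card, Fintype.card_subtype]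
    congr 1
    apply Finset.filter_congr
    intro l _
    simp
  · apply Finset.sum_congr rfl
    intro y hy
    have hxy : x ≠ y := fun h => (Finset.mem_erase.mp hy).1 h.symm
    have hu := HasLines.existsUnique_line P L x y hxy
    have : (Finset.univ.filter (fun l : L => x ∈ l ∧ y ∈ l)).card = 1 := by
      rw [Finset.card_eq_one]
      obtain ⟨l, hl, hl'⟩ := hu
      exact ⟨l, by ext l'; simp only [Finset.mem_filter, Finset.mem_univ, true_and,
        Finset.mem_singleton]; exact ⟨fun h => hl' l' h, fun h => h ▸ hl⟩⟩
    rw [this, one_smul]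
end aux

section key
variable {P L : Type*} [Membership P L] [Fintype P] [Fintype L] [ProjectivePlane P L]
  {G : Type*} [AddCommGroup G]

open Classical in
lemma key_const (v : P → G) (hv : LineInvariant P L v) (x x' : P) :
    (ProjectivePlane.order P L) • v x = (ProjectivePlane.order P L) • v x' := by
  obtain ⟨p₁, p₂, p₃, l₁, -⟩ := @ProjectivePlane.exists_config P L _ _
  set n := ProjectivePlane.order P L with hn
  set s := lineSum v l₁ with hs
  have h : ∀ z : P, n • v z + ∑ y : P, v y = (n + 1) • s := by
    intro z
    have hcard : (Finset.univ.filter (fun l : L => z ∈ l)).card = n + 1 := by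
      rw [← ProjectivePlane.lineCount_eq (P := P) (L := L) z, lineCount,
        Nat.card_eq_fintype_card, Fintype.card_subtype]
    have h1 : ∑ l ∈ Finset.univ.filter (fun l : L => z ∈ l), lineSum v l = (n + 1) • s := by
      rw [Finset.sum_congr rfl (fun l _ => hv l l₁), Finset.sum_const, hcard]
    have h2 := key_count (L := L) z v
    have h3 : lineCount L z = n + 1 := ProjectivePlane.lineCount_eq (P := P) (L := L) z
    rw [h1, h3, Finset.sum_erase_eq_sub (Finset.mem_univ z), succ_nsmul] at h2
    rw [succ_nsmul, h2, succ_nsmul]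
    abel
  have := (h x).trans (h x').symm
  exact add_right_cancel this

end key

/-- Any line-invariant `v : P → ℤ/mℤ` on a projective plane of order `n` takes at most
`gcd(n, m)` distinct values. -/
theorem stmt_7 {P L : Type*} [Membership P L] [Fintype P] [Fintype L]
    [ProjectivePlane P L] {n : ℕ} (hn : ProjectivePlane.order P L = n)
    (m : ℕ) (hm : 1 ≤ m) (v : P → ZMod m) (hv : LineInvariant P L v) :
    (Set.range v).ncard ≤ Nat.gcd n m := by
  haveI : NeZero m := ⟨by omega⟩
  obtain ⟨x₀, -⟩ := @ProjectivePlane.exists_config P L _ _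
  have hconst : ∀ x : P, n • v x = n • v x₀ := by
    intro x
    rw [← hn]
    exact key_const (L := L) v hv x x₀
  set f : ZMod m →+ ZMod m := AddMonoidHom.mulLeft (n : ZMod m) with hf
  -- range v injects into ker f
  have hsub : ∀ z ∈ Set.range v, z - v x₀ ∈ f.ker := by
    rintro z ⟨x, rfl⟩
    simp only [AddMonoidHom.mem_ker, hf, AddMonoidHom.coe_mulLeft, mul_sub]
    rw [← nsmul_eq_mul, ← nsmul_eq_mul, hconst x, sub_self]
  have hinj : Set.ncard (Set.range v) ≤ Nat.card f.ker := by
    rw [← Nat.card_coe_set_eq]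
    apply Nat.card_le_card_of_injective (fun z => (⟨z.1 - v x₀, hsub z.1 z.2⟩ : f.ker))
    intro a b hab
    simpa [Subtype.ext_iff, sub_left_inj] using hab
  refine hinj.trans (le_of_eq ?_)
  -- compute card of kernel
  have hrange : f.range = AddSubgroup.zmultiples (n : ZMod m) := by
    ext z
    simp only [AddMonoidHom.mem_range, hf, AddMonoidHom.coe_mulLeft,
      AddSubgroup.mem_zmultiples_iff]
    constructor
    · rintro ⟨w, rfl⟩
      refine ⟨w.val, ?_⟩
      rw [natCast_zsmul, nsmul_eq_mul, mul_comm, ZMod.natCast_val, ZMod.cast_id]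
    · rintro ⟨k, rfl⟩
      exact ⟨(k : ZMod m), by rw [zsmul_eq_mul, mul_comm]⟩
  have hidx : f.ker.index = m / m.gcd n := by
    rw [AddSubgroup.index_ker, hrange, Nat.card_zmultiples,
      ZMod.addOrderOf_coe n (NeZero.ne m)]
  have hmul := AddSubgroup.card_mul_index f.ker
  rw [Nat.card_zmod, hidx] at hmul
  have hd : m.gcd n ∣ m := Nat.gcd_dvd_left m n
  have hq : 0 < m / m.gcd n := Nat.div_pos (Nat.le_of_dvd (by omega) hd) (Nat.gcd_pos_of_pos_left n (by omega))
  have heq : m / (m / m.gcd n) = Nat.card f.ker := Nat.div_eq_of_eq_mul_left hq hmul.symm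
  rw [Nat.gcd_comm]
  exact heq.symm.trans (Nat.div_div_self hd (by omega))
end
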